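/- For every infinite boolean algebra B: π(B) ≤ Irr_mm(B) ≤ |B| ≤ 2^{π(B)}, where π(B) is the pi-weight and Irr_mm(B) is the minimum size of a maximal irredundant subset of B. -/

import Mathlib

open Cardinal Set

universe u
variable {B : Type u} [BooleanAlgebra B]

/-- Membership in the boolean subalgebra of `B` generated by `E`. -/
inductive InGen (E : Set B) : B → Prop
  | base {a : B} : a ∈ E → InGen E a
  | bot : InGen E ⊥
  | compl {a : B} : InGen E a → InGen E aᶜ
  | sup {a b : B} : InGen E a → InGen E b → InGen E (a ⊔ b)

/-- `E` is irredundant. -/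
def Irred (E : Set B) : Prop := ∀ a ∈ E, ¬ InGen (E \ {a}) a

/-- `E` is independent. -/
def Indep (E : Set B) : Prop :=
  ∀ F G : Finset B, ↑F ⊆ E → ↑G ⊆ E → Disjoint F G →
    F.inf id ⊓ G.inf (fun a => aᶜ) ≠ ⊥

/-- `S` is dense in `B`. -/
def DenseSub (S : Set B) : Prop := ∀ b : B, b ≠ ⊥ → ∃ d ∈ S, d ≠ ⊥ ∧ d ≤ b

/-- pi-weight of `B`: least size of a dense subset. -/
noncomputable def piWeight (B : Type u) [BooleanAlgebra B] : Cardinal :=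
  sInf {c | ∃ S : Set B, DenseSub S ∧ #S = c}

/-- `E` is a maximal irredundant subset of `B`. -/
def MaxIrred (E : Set B) : Prop :=
  Irred E ∧ ∀ b : B, b ∉ E → ¬ Irred (insert b E)

/-- least size of a maximal irredundant subset of `B`. -/
noncomputable def irrMM (B : Type u) [BooleanAlgebra B] : Cardinal :=
  sInf {c | ∃ E : Set B, MaxIrred E ∧ #E = c}


theorem InGen.mono {S T : Set B} (h : S ⊆ T) {x : B} (hx : InGen S x) : InGen T x := by
  induction hx with
  | base ha => exact .base (h ha)
  | bot => exact .bot
  | compl _ ih => exact .compl ih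
  | sup _ _ ih1 ih2 => exact .sup ih1 ih2

theorem InGen.top {S : Set B} : InGen S (⊤ : B) := by
  have := InGen.compl (InGen.bot (E := S)); rwa [compl_bot] at this

theorem InGen.inf {S : Set B} {x y : B} (hx : InGen S x) (hy : InGen S y) :
    InGen S (x ⊓ y) := by
  have := InGen.compl (InGen.sup hx.compl hy.compl)
  rwa [compl_sup, compl_compl, compl_compl] at this

theorem InGen.sdiff {S : Set B} {x y : B} (hx : InGen S x) (hy : InGen S y) :
    InGen S (x \ y) := by
  rw [_root_.sdiff_eq]; exact hx.inf hy.compl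

/-- every element of the closure is generated by a finite subset -/
theorem InGen.finset {S : Set B} {x : B} (hx : InGen S x) :
    ∃ F : Finset B, ↑F ⊆ S ∧ InGen (↑F : Set B) x := by
  induction hx with
  | base ha => exact ⟨{_}, by simpa, .base (by simp)⟩
  | bot => exact ⟨∅, by simp, .bot⟩
  | compl _ ih => obtain ⟨F, hF, h⟩ := ih; exact ⟨F, hF, h.compl⟩
  | sup _ _ ih1 ih2 =>
    classical
    obtain ⟨F, hF, h1⟩ := ih1; obtain ⟨G, hG, h2⟩ := ih2
    refine ⟨F ∪ G, ?_, ?_⟩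
    · rw [Finset.coe_union]; exact union_subset hF hG
    · rw [Finset.coe_union]
      exact .sup (h1.mono subset_union_left) (h2.mono subset_union_right)

theorem chain_finset {c : Set (Set B)} (hchain : IsChain (· ⊆ ·) c)
    {E₁ : Set B} (hE₁ : E₁ ∈ c) (F : Finset B) (hF : ↑F ⊆ ⋃₀ c) :
    ∃ E₂ ∈ c, ↑F ⊆ E₂ := by
  classical
  induction F using Finset.induction with
  | empty => exact ⟨E₁, hE₁, by simp⟩
  | @insert x G hxG ih =>
    have hG : ↑G ⊆ ⋃₀ c := (Finset.coe_subset.2 (Finset.subset_insert _ _)).trans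
      (by simpa using hF)
    obtain ⟨E₃, hE₃c, hGE₃⟩ := ih hG
    obtain ⟨E₄, hE₄c, hxE₄⟩ := mem_sUnion.1 (hF (Finset.mem_coe.2 (Finset.mem_insert_self x G)))
    obtain ⟨E₅, hE₅c, h1, h2⟩ := hchain.directedOn E₃ hE₃c E₄ hE₄c
    refine ⟨E₅, hE₅c, ?_⟩
    rw [Finset.coe_insert]
    exact insert_subset (h2 hxE₄) (hGE₃.trans h1)

theorem exists_maxIrred (B : Type u) [BooleanAlgebra B] : ∃ E : Set B, MaxIrred E := by
  have hz : ∀ c ⊆ {E : Set B | Irred E}, IsChain (· ⊆ ·) c →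
      ∃ ub ∈ {E : Set B | Irred E}, ∀ s ∈ c, s ⊆ ub := by
    intro c hc hchain
    rcases c.eq_empty_or_nonempty with rfl | ⟨E₁, hE₁⟩
    · exact ⟨∅, fun a ha => absurd ha (notMem_empty a), by simp⟩
    refine ⟨⋃₀ c, ?_, fun s hs => subset_sUnion_of_mem hs⟩
    intro a ha hgen
    obtain ⟨F, hF, hFgen⟩ := hgen.finset
    obtain ⟨E₂, hE₂c, hFE₂⟩ := chain_finset hchain hE₁ F (hF.trans diff_subset)
    obtain ⟨Ea, hEac, haEa⟩ := mem_sUnion.1 ha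
    obtain ⟨E₀, hE₀c, h1, h2⟩ := hchain.directedOn E₂ hE₂c Ea hEac
    have haE₀ : a ∈ E₀ := h2 haEa
    have hFsub : ↑F ⊆ E₀ \ {a} := fun x hx => ⟨h1 (hFE₂ hx), (hF hx).2⟩
    exact (hc hE₀c) a haE₀ (hFgen.mono hFsub)
  obtain ⟨E, hE⟩ := zorn_subset {E : Set B | Irred E} hz
  refine ⟨E, hE.prop, fun b hb hirr => ?_⟩
  have : insert b E ⊆ E := hE.2 hirr (subset_insert b E)
  exact hb (this (mem_insert b E))

theorem mk_le_two_pow_of_dense {S : Set B} (hS : DenseSub S) : #B ≤ 2 ^ #S := by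
  have hinj : Function.Injective (fun b : B => {d : S | (d : B) ≠ ⊥ ∧ (d : B) ≤ b}) := by
    intro b₁ b₂ h
    by_contra hne
    have key : ∀ x y : B, {d : S | (d : B) ≠ ⊥ ∧ (d : B) ≤ x} = {d : S | (d : B) ≠ ⊥ ∧ (d : B) ≤ y} → x ≤ y := by
      intro x y hxy
      by_contra hle
      have hxd : x \ y ≠ ⊥ := fun h0 => hle (sdiff_eq_bot_iff.1 h0)
      obtain ⟨d, hdS, hd0, hdle⟩ := hS _ hxd
      have h1 : (⟨d, hdS⟩ : S) ∈ {d : S | (d : B) ≠ ⊥ ∧ (d : B) ≤ x} :=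
        ⟨hd0, hdle.trans sdiff_le⟩
      rw [hxy] at h1
      have hdy : d ≤ y := h1.2
      have : d ≤ y ⊓ (x \ y) := le_inf hdy hdle
      have hbot : y ⊓ (x \ y) = ⊥ := inf_sdiff_self_right
      exact hd0 (le_bot_iff.1 (hbot ▸ this))
    exact hne (le_antisymm (key _ _ h) (key _ _ h.symm))
  calc #B ≤ #(Set S) := Cardinal.mk_le_of_injective hinj
    _ = 2 ^ #S := Cardinal.mk_set

section Monomials
variable [DecidableEq B]

noncomputable def mon (F G : Finset B) : B := F.inf (fun e => if e ∈ G then e else eᶜ)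

theorem mon_dichotomy {F : Finset B} {x : B} (hx : InGen (↑F : Set B) x) (G : Finset B) :
    mon F G ≤ x ∨ mon F G ⊓ x = ⊥ := by
  induction hx with
  | base ha =>
    rename_i e
    by_cases he : e ∈ G
    · left
      have := Finset.inf_le (f := fun e => if e ∈ G then e else eᶜ) (Finset.mem_coe.1 ha)
      simpa [he, mon] using this
    · right
      have hc : mon F G ≤ eᶜ := by
        have := Finset.inf_le (f := fun e => if e ∈ G then e else eᶜ) (Finset.mem_coe.1 ha)
        simpa [he, mon] using this
      exact disjoint_iff.1 (le_compl_iff_disjoint_right.1 hc)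
  | bot => right; simp
  | compl h ih =>
    rename_i y
    rcases ih with h1 | h1
    · right
      exact le_bot_iff.1 ((inf_le_inf h1 le_rfl).trans_eq (inf_compl_eq_bot))
    · left
      exact (disjoint_iff.2 h1).le_compl_right
  | sup h1 h2 ih1 ih2 =>
    rcases ih1 with h3 | h3
    · left; exact h3.trans le_sup_left
    rcases ih2 with h4 | h4
    · left; exact h4.trans le_sup_right
    · right; rw [inf_sup_left, h3, h4, bot_sup_eq]

theorem mon_sup_top (F : Finset B) : F.powerset.sup (mon F) = ⊤ := by
  induction F using Finset.induction with
  | empty => simp [mon]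
  | @insert a F haF ih =>
    have h1 : ∀ G ∈ F.powerset, mon (insert a F) G = aᶜ ⊓ mon F G := by
      intro G hG
      have haG : a ∉ G := fun h => haF (Finset.mem_powerset.1 hG h)
      rw [mon, Finset.inf_insert, if_neg haG]; rfl
    have h2 : ∀ G ∈ F.powerset, (mon (insert a F) ∘ insert a) G = a ⊓ mon F G := by
      intro G hG
      show mon (insert a F) (insert a G) = _
      rw [mon, Finset.inf_insert, if_pos (Finset.mem_insert_self a G)]
      congr 1
      refine Finset.inf_congr rfl (fun e he => ?_)
      have hea : e ≠ a := fun h => haF (h ▸ he)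
      simp [Finset.mem_insert, hea]
    rw [Finset.powerset_insert, Finset.sup_union, Finset.sup_image,
      Finset.sup_congr rfl h1, Finset.sup_congr rfl h2,
      ← Finset.sup_inf_distrib_left, ← Finset.sup_inf_distrib_left, ih,
      inf_top_eq, inf_top_eq, compl_sup_eq_top]

/-- If the subalgebra generated by a finite set is dense, then some finite set is dense. -/
theorem finite_dense_of_gen_dense {F : Finset B} (h : DenseSub {x | InGen (↑F : Set B) x}) :
    DenseSub (↑(F.powerset.image (mon F)) : Set B) := by
  intro b hb
  have hex : ∃ G ∈ F.powerset, mon F G ⊓ b ≠ ⊥ := by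
    by_contra hcon
    push_neg at hcon
    have hbot : b ⊓ F.powerset.sup (mon F) = ⊥ := by
      rw [Finset.sup_inf_distrib_left, Finset.sup_eq_bot_iff]
      intro G hG
      rw [inf_comm]; exact hcon G hG
    rw [mon_sup_top, inf_top_eq] at hbot
    exact hb hbot
  obtain ⟨G, hG, hne⟩ := hex
  obtain ⟨d, hd, hd0, hdle⟩ := h _ hne
  rcases mon_dichotomy hd G with h1 | h1
  · refine ⟨mon F G, Finset.mem_coe.2 (Finset.mem_image_of_mem _ hG), ?_, ?_⟩
    · intro h0
      exact hd0 (le_bot_iff.1 (h0 ▸ (hdle.trans inf_le_left)))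
    · exact h1.trans (hdle.trans inf_le_right)
  · exact absurd (le_bot_iff.1 (h1 ▸ le_inf (hdle.trans inf_le_left) le_rfl)) hd0
end Monomials

section CardGen

def chainC (E : Set B) : ℕ → Set B
  | 0 => insert ⊥ E
  | n+1 => chainC E n ∪ (compl '' chainC E n) ∪ (Set.image2 (· ⊔ ·) (chainC E n) (chainC E n))

theorem chainC_mono (E : Set B) : Monotone (chainC E) :=
  monotone_nat_of_le_succ fun n => (subset_union_left.trans subset_union_left)

theorem inGen_subset_iUnion (E : Set B) {x : B} (hx : InGen E x) : x ∈ ⋃ n, chainC E n := by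
  induction hx with
  | base ha => exact mem_iUnion.2 ⟨0, Or.inr ha⟩
  | bot => exact mem_iUnion.2 ⟨0, Or.inl rfl⟩
  | compl _ ih =>
    obtain ⟨n, hn⟩ := mem_iUnion.1 ih
    exact mem_iUnion.2 ⟨n+1, Or.inl (Or.inr ⟨_, hn, rfl⟩)⟩
  | sup _ _ ih1 ih2 =>
    obtain ⟨m, hm⟩ := mem_iUnion.1 ih1
    obtain ⟨n, hn⟩ := mem_iUnion.1 ih2
    exact mem_iUnion.2 ⟨max m n + 1, Or.inr
      ⟨_, chainC_mono E (le_max_left m n) hm, _, chainC_mono E (le_max_right m n) hn, rfl⟩⟩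

theorem mk_chainC_le (E : Set B) (n : ℕ) : #(chainC E n) ≤ max #E ℵ₀ := by
  have hκ : ℵ₀ ≤ max #E ℵ₀ := le_max_right _ _
  induction n with
  | zero =>
    calc #(chainC E 0) ≤ #E + 1 := by
          simpa [chainC] using (Cardinal.mk_insert_le (s := E) (a := (⊥ : B)))
      _ ≤ max #E ℵ₀ + max #E ℵ₀ := add_le_add (le_max_left _ _) (le_trans (by simp) hκ)
      _ = max #E ℵ₀ := Cardinal.add_eq_self hκ
  | succ n ih =>
    have h1 : #(compl '' chainC E n : Set B) ≤ max #E ℵ₀ := (Cardinal.mk_image_le).trans ih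
    have h2 : #(Set.image2 (· ⊔ ·) (chainC E n) (chainC E n) : Set B) ≤ max #E ℵ₀ := by
      refine (Cardinal.mk_image2_le).trans ?_
      calc #(chainC E n) * #(chainC E n) ≤ max #E ℵ₀ * max #E ℵ₀ := mul_le_mul' ih ih
        _ = max #E ℵ₀ := Cardinal.mul_eq_self hκ
    calc #(chainC E (n+1)) ≤ #((chainC E n ∪ compl '' chainC E n : Set B)) +
          #(Set.image2 (· ⊔ ·) (chainC E n) (chainC E n) : Set B) := Cardinal.mk_union_le _ _
      _ ≤ (#(chainC E n) + #(compl '' chainC E n : Set B)) + _ :=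
          add_le_add (Cardinal.mk_union_le _ _) le_rfl
      _ ≤ (max #E ℵ₀ + max #E ℵ₀) + max #E ℵ₀ := add_le_add (add_le_add ih h1) h2
      _ = max #E ℵ₀ := by rw [Cardinal.add_eq_self hκ, Cardinal.add_eq_self hκ]

theorem mk_gen_le (E : Set B) : #{x | InGen E x} ≤ max #E ℵ₀ := by
  have hsub : {x | InGen E x} ⊆ ⋃ n, chainC E n := fun x hx => inGen_subset_iUnion E hx
  refine (Cardinal.mk_le_mk_of_subset hsub).trans ?_
  have heq : (⋃ n, chainC E n) = ⋃ m : ULift.{u} ℕ, chainC E m.down := by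
    ext x
    simp only [mem_iUnion]
    exact ⟨fun ⟨n, hn⟩ => ⟨⟨n⟩, hn⟩, fun ⟨m, hm⟩ => ⟨m.down, hm⟩⟩
  rw [heq]
  refine (Cardinal.mk_iUnion_le _).trans ?_
  have h1 : ⨆ m : ULift.{u} ℕ, #(chainC E m.down) ≤ max #E ℵ₀ :=
    ciSup_le' (fun m => mk_chainC_le E m.down)
  calc #(ULift.{u} ℕ) * ⨆ m : ULift.{u} ℕ, #(chainC E m.down) ≤ ℵ₀ * max #E ℵ₀ := by
        rw [Cardinal.mk_uLift, Cardinal.mk_nat, Cardinal.lift_aleph0]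
        exact mul_le_mul' le_rfl h1
    _ ≤ max #E ℵ₀ * max #E ℵ₀ := mul_le_mul' (le_max_right _ _) le_rfl
    _ = max #E ℵ₀ := Cardinal.mul_eq_self (le_max_right _ _)

end CardGen

/-- Representation: elements generated by `insert b G` agree below `bᶜ` with an element
generated by `G`. -/
theorem inGen_insert_rep {G : Set B} {b x : B} (hx : InGen (insert b G) x) :
    ∃ y, InGen G y ∧ x ⊓ bᶜ = y ⊓ bᶜ := by
  induction hx with
  | base ha =>
    rcases ha with rfl | ha
    · exact ⟨⊥, .bot, by simp⟩
    · exact ⟨_, .base ha, rfl⟩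
  | bot => exact ⟨⊥, .bot, rfl⟩
  | compl _ ih =>
    obtain ⟨y, hy, hxy⟩ := ih
    rename_i z _
    refine ⟨yᶜ, hy.compl, ?_⟩
    have h1 : zᶜ ⊓ bᶜ = (z ⊓ bᶜ)ᶜ ⊓ bᶜ := by
      rw [compl_inf, inf_sup_right, compl_compl, inf_compl_eq_bot, sup_bot_eq]
    have h2 : yᶜ ⊓ bᶜ = (y ⊓ bᶜ)ᶜ ⊓ bᶜ := by
      rw [compl_inf, inf_sup_right, compl_compl, inf_compl_eq_bot, sup_bot_eq]
    rw [h1, hxy, ← h2]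
  | sup _ _ ih1 ih2 =>
    obtain ⟨y₁, hy₁, h1⟩ := ih1
    obtain ⟨y₂, hy₂, h2⟩ := ih2
    exact ⟨y₁ ⊔ y₂, hy₁.sup hy₂, by rw [inf_sup_right, h1, h2, ← inf_sup_right]⟩

theorem dense_gen_of_maxIrred {E : Set B} (hE : MaxIrred E) :
    DenseSub {x | InGen E x} := by
  intro b hb
  by_contra hcon
  push_neg at hcon
  have H : ∀ d : B, InGen E d → d ≠ ⊥ → ¬ d ≤ b := fun d h1 h2 h3 => hcon d h1 h2 h3
  have hbE : b ∉ E := fun hbE => H b (.base hbE) hb le_rfl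
  refine hE.2 b hbE ?_
  intro a ha hgen
  rcases mem_insert_iff.1 ha with rfl | haE
  · -- a = b
    have hsub : insert a E \ {a} ⊆ E := by
      intro x hx
      exact (mem_insert_iff.1 hx.1).resolve_left hx.2
    exact H a (hgen.mono hsub) hb le_rfl
  · -- a ∈ E
    have hab : a ≠ b := fun h => hbE (h ▸ haE)
    have hsub : insert b E \ {a} ⊆ insert b (E \ {a}) := by
      intro x hx
      rcases mem_insert_iff.1 hx.1 with rfl | hxE
      · exact mem_insert _ _
      · exact mem_insert_of_mem _ ⟨hxE, hx.2⟩
    obtain ⟨y, hy, hxy⟩ := inGen_insert_rep (hgen.mono hsub)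
    have hyE : InGen E y := hy.mono diff_subset
    have hdgen : InGen E ((a \ y) ⊔ (y \ a)) :=
      ((InGen.base haE).sdiff hyE).sup (hyE.sdiff (.base haE))
    have k : ∀ u v : B, u ⊓ bᶜ = v ⊓ bᶜ → u \ v ≤ b := by
      intro u v huv
      have hb1 : (u \ v) ⊓ bᶜ = ⊥ := by
        rw [_root_.sdiff_eq, inf_right_comm, huv, inf_right_comm, inf_compl_eq_bot, bot_inf_eq]
      have := (disjoint_iff.2 hb1).le_compl_right
      rwa [compl_compl] at this
    have hdb : ((a \ y) ⊔ (y \ a)) ≤ b := sup_le (k a y hxy) (k y a hxy.symm)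
    have hd0 : ((a \ y) ⊔ (y \ a)) = ⊥ := by
      by_contra h0
      exact H _ hdgen h0 hdb
    have hay : a = y := by
      rcases sup_eq_bot_iff.1 hd0 with ⟨h1, h2⟩
      exact le_antisymm (sdiff_eq_bot_iff.1 h1) (sdiff_eq_bot_iff.1 h2)
    exact hE.1 a haE (by rwa [← hay] at hy)

theorem piWeight_le_of_dense {S : Set B} (hS : DenseSub S) : piWeight B ≤ #S :=
  csInf_le (OrderBot.bddBelow _) ⟨S, hS, rfl⟩

theorem piWeight_le_irrMM_le_card_le_two_pow (B : Type u) [BooleanAlgebra B]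
    [Infinite B] :
    piWeight B ≤ irrMM B ∧ irrMM B ≤ #B ∧ #B ≤ 2 ^ piWeight B := by
  classical
  obtain ⟨E, hE⟩ := exists_maxIrred B
  refine ⟨?_, ?_, ?_⟩
  · -- piWeight ≤ irrMM
    have hne : {c | ∃ E : Set B, MaxIrred E ∧ #E = c}.Nonempty := ⟨#E, E, hE, rfl⟩
    obtain ⟨E₀, hE₀, hcard⟩ : ∃ E₀ : Set B, MaxIrred E₀ ∧ #E₀ = irrMM B := csInf_mem hne
    have hdense := dense_gen_of_maxIrred hE₀
    -- E₀ is infinite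
    have hinf : ℵ₀ ≤ #E₀ := by
      by_contra hfin
      push_neg at hfin
      have hEfin : E₀.Finite := Cardinal.lt_aleph0_iff_set_finite.1 hfin
      have hcoe : E₀ = ↑hEfin.toFinset := by simp
      have hd2 : DenseSub {x | InGen (↑hEfin.toFinset : Set B) x} := by rwa [← hcoe]
      have hd3 := finite_dense_of_gen_dense hd2
      have h4 := mk_le_two_pow_of_dense hd3
      have h5 : (#(↑(hEfin.toFinset.powerset.image (mon hEfin.toFinset)) : Set B)) < ℵ₀ :=
        Cardinal.lt_aleph0_iff_set_finite.2 (Finset.finite_toSet _)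
      have h6 : #B < ℵ₀ := h4.trans_lt (Cardinal.power_lt_aleph0 (Cardinal.nat_lt_aleph0 2) h5)
      exact absurd h6 (not_lt.2 (Cardinal.aleph0_le_mk B))
    calc piWeight B ≤ #{x | InGen E₀ x} := piWeight_le_of_dense hdense
      _ ≤ max #E₀ ℵ₀ := mk_gen_le E₀
      _ = #E₀ := max_eq_left hinf
      _ = irrMM B := hcard
  · -- irrMM ≤ #B
    have h : irrMM B ≤ #E := by
      rw [irrMM]
      exact csInf_le (OrderBot.bddBelow _) ⟨E, hE, rfl⟩
    exact h.trans (Cardinal.mk_set_le E)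
  · -- #B ≤ 2 ^ piWeight
    have hdu : DenseSub (univ : Set B) := fun b hb => ⟨b, mem_univ b, hb, le_rfl⟩
    have hne : {c | ∃ S : Set B, DenseSub S ∧ #S = c}.Nonempty :=
      ⟨#(univ : Set B), ⟨univ, hdu, rfl⟩⟩
    obtain ⟨S, hS, hcard⟩ : ∃ S : Set B, DenseSub S ∧ #S = piWeight B := csInf_mem hne
    calc #B ≤ 2 ^ #S := mk_le_two_pow_of_dense hS
      _ = 2 ^ piWeight B := by rw [hcard]
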